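/- The empirical quantile variance is an upward-biased estimator of aleatoric uncertainty: with y_i(θ) square-integrable, E_θ[Var_i(y_i(θ))] = Var_i(E_θ[y_i(θ)]) + (1/N)·Σ_{j=1}^N Var_θ(y_j(θ) − E_i[y_i(θ)]). In particular, if Var_θ(y_j(θ) − E_i[y_i(θ)]) > 0 for some j, then E_θ[Var_i(y_i(θ))] > Var_i(E_θ[y_i(θ)]) = σ²_aleatoric. -/

import Mathlib

open MeasureTheory ProbabilityTheory

/-- Empirical mean over the uniform distribution on `Fin N`. -/
noncomputable def empMean {N : ℕ} (v : Fin N → ℝ) : ℝ := (∑ i, v i) / N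

/-- Empirical variance over the uniform distribution on `Fin N`. -/
noncomputable def empVar {N : ℕ} (v : Fin N → ℝ) : ℝ :=
  (∑ j, (v j - empMean v) ^ 2) / N

/-- The empirical quantile variance is an upward-biased estimator of the aleatoric
uncertainty `σ²_aleatoric = Var_i(E_θ[y_i(θ)])`:
`E_θ[Var_i(y_i(θ))] = Var_i(E_θ[y_i(θ)]) + (1/N)·∑_j Var_θ(y_j(θ) − E_i[y_i(θ)])`,
and the bias is strict as soon as one of the variances `Var_θ(y_j(θ) − E_i[y_i(θ)])`
is positive. -/
theorem empirical_quantile_variance_biased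
    {Θ : Type*} [MeasurableSpace Θ] (μ : Measure Θ) [IsProbabilityMeasure μ]
    (N : ℕ) (hN : 0 < N) (y : Fin N → Θ → ℝ)
    (hmeas : ∀ i, Measurable (y i)) (hL2 : ∀ i, MemLp (y i) 2 μ) :
    (∫ θ, empVar (fun i => y i θ) ∂μ =
        empVar (fun i => ∫ θ, y i θ ∂μ) +
          (1 / N : ℝ) *
            ∑ j, variance (fun θ => y j θ - empMean (fun i => y i θ)) μ) ∧
      ((∃ j, 0 < variance (fun θ => y j θ - empMean (fun i => y i θ)) μ) →
        empVar (fun i => ∫ θ, y i θ ∂μ) < ∫ θ, empVar (fun i => y i θ) ∂μ) := by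
  set g : Fin N → Θ → ℝ := fun j θ => y j θ - empMean (fun i => y i θ) with hg_def
  have hSum : MemLp (fun θ => ∑ i, y i θ) 2 μ := by
    exact memLp_finset_sum (μ := μ) (Finset.univ) (fun i _ => hL2 i)
  have hMean : MemLp (fun θ => empMean (fun i => y i θ)) 2 μ := by
    simp only [empMean, div_eq_mul_inv, mul_comm]
    exact hSum.const_mul _
  have hg : ∀ j, MemLp (g j) 2 μ := fun j => (hL2 j).sub hMean
  have hgsq : ∀ j, Integrable (fun θ => (g j θ) ^ 2) μ := fun j => (hg j).integrable_sq
  have hInt_mean : Integrable (fun θ => empMean (fun i => y i θ)) μ :=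
    hMean.integrable one_le_two
  have hEg : ∀ j, ∫ θ, g j θ ∂μ = ∫ θ, y j θ ∂μ - empMean (fun i => ∫ θ, y i θ ∂μ) := by
    intro j
    rw [hg_def]
    rw [integral_sub ((hL2 j).integrable one_le_two) hInt_mean]
    congr 1
    simp only [empMean, div_eq_mul_inv]
    rw [integral_mul_const, integral_finset_sum _ (fun i _ => (hL2 i).integrable one_le_two)]
  have hEgsq : ∀ j, ∫ θ, (g j θ) ^ 2 ∂μ
      = variance (g j) μ + (∫ θ, y j θ ∂μ - empMean (fun i => ∫ θ, y i θ ∂μ)) ^ 2 := by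
    intro j
    have hpw : (fun θ => (g j θ) ^ 2) = g j ^ 2 := by funext θ; simp
    rw [hpw, variance_eq_sub (hg j), ← hEg j]
    ring
  have hmain : ∫ θ, empVar (fun i => y i θ) ∂μ =
      empVar (fun i => ∫ θ, y i θ ∂μ) +
        (1 / N : ℝ) * ∑ j, variance (g j) μ := by
    have h1 : (fun θ => empVar (fun i => y i θ))
        = fun θ => (∑ j, (g j θ) ^ 2) * (N : ℝ)⁻¹ := by
      funext θ
      simp [empVar, div_eq_mul_inv, hg_def]
    rw [h1, integral_mul_const, integral_finset_sum _ (fun j _ => hgsq j)]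
    have h2 : empVar (fun i => ∫ θ, y i θ ∂μ)
        = (∑ j, (∫ θ, y j θ ∂μ - empMean (fun i => ∫ θ, y i θ ∂μ)) ^ 2) * (N : ℝ)⁻¹ := by
      simp [empVar, div_eq_mul_inv]
    rw [h2]
    simp only [hEgsq, Finset.sum_add_distrib]
    ring
  refine ⟨hmain, fun ⟨j, hj⟩ => ?_⟩
  rw [hmain]
  have hpos : 0 < (1 / N : ℝ) * ∑ j, variance (g j) μ := by
    apply mul_pos (by positivity)
    exact Finset.sum_pos' (fun i _ => variance_nonneg _ _) ⟨j, Finset.mem_univ j, hj⟩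
  linarith
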